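/- Let n ≥ 1 and let Ω be a nonempty open convex subset of ℝⁿ. For any bounded log-concave function f: Ω → [0,∞), there exists a family (f_a)_{a>0} of functions f_a: Ω → [0,a) such that each f_a is H_a-concave in Ω and f_a → f uniformly on Ω as a → ∞ (i.e., sup_{x∈Ω} |f_a(x) − f(x)| → 0). -/

import Mathlib

open MeasureTheory Real Set Filter

noncomputable section

abbrev Euc (n : ℕ) := EuclideanSpace ℝ (Fin n)

noncomputable def heatFlow (n : ℕ) (t : ℝ) (φ : Euc n → ℝ) (x : Euc n) : ℝ :=
  (4 * Real.pi * t) ^ (-(n : ℝ) / 2) * ∫ y, Real.exp (-‖x - y‖ ^ 2 / (4 * t)) * φ y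

/-- `f` is `F`-concave on `Ω` (extended-real valued inequality). -/
def FConcaveOn {V : Type*} [AddCommGroup V] [Module ℝ V]
    (Ω : Set V) (F : ℝ → EReal) (f : V → ℝ) : Prop :=
  ∀ x ∈ Ω, ∀ y ∈ Ω, ∀ τ : ℝ, τ ∈ Set.Ioo (0:ℝ) 1 →
    ((1 - τ : ℝ) : EReal) * F (f x) + ((τ : ℝ) : EReal) * F (f y)
      ≤ F (f ((1 - τ) • x + τ • y))

/-- `F` is admissible on `[0, a)`. -/
def Admissible (a : EReal) (F : ℝ → EReal) : Prop :=
  0 < a ∧ F 0 = ⊥ ∧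
  ContinuousOn F {r : ℝ | 0 < r ∧ (r : EReal) < a} ∧
  (∀ r : ℝ, 0 < r → (r : EReal) < a → F r ≠ ⊥ ∧ F r ≠ ⊤) ∧
  StrictMonoOn F {r : ℝ | 0 ≤ r ∧ (r : EReal) < a}

/-- extended-real logarithm with `log 0 = -∞`. -/
noncomputable def elog (r : ℝ) : EReal := if 0 < r then (Real.log r : EReal) else ⊥

noncomputable def Efun (s : ℝ) : ℝ :=
  (4 * Real.pi) ^ (-(1:ℝ) / 2) * ∫ s' in Set.Ioi (0:ℝ), Real.exp (-(s - s') ^ 2 / 4)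

noncomputable def Hfun : ℝ → ℝ := Function.invFun Efun

noncomputable def Ha (a : EReal) (r : ℝ) : EReal :=
  if 0 < r then
    (if a = ⊤ then (Real.log r : EReal) else (Hfun (r / a.toReal) : EReal))
  else ⊥

namespace S7


def gK (v : ℝ) : ℝ := Real.exp (-v ^ 2 / 4)

def Gt (t : ℝ) : ℝ := ∫ v in Set.Ioi t, gK v

lemma gK_pos (v : ℝ) : 0 < gK v := Real.exp_pos _

lemma gK_le_one (v : ℝ) : gK v ≤ 1 := by
  rw [gK, Real.exp_le_one_iff]
  nlinarith [sq_nonneg v]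

lemma gK_cont : Continuous gK := by
  unfold gK; fun_prop

lemma gK_eq (v : ℝ) : gK v = Real.exp (-(4:ℝ)⁻¹ * v ^ 2) := by
  rw [gK]; ring_nf

lemma gK_integrable : Integrable gK := by
  have := integrable_exp_neg_mul_sq (b := (4:ℝ)⁻¹) (by norm_num)
  exact this.congr (by
    filter_upwards with v
    rw [gK_eq])

lemma gK_integrableOn (s : Set ℝ) : IntegrableOn gK s := gK_integrable.integrableOn

lemma gK_total : ∫ v, gK v = Real.sqrt (4 * π) := by
  have h := integral_gaussian (4:ℝ)⁻¹
  have : ∫ v, gK v = ∫ x : ℝ, Real.exp (-(4:ℝ)⁻¹ * x ^ 2) := by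
    congr 1; ext v; rw [gK_eq]
  rw [this, h]
  rw [show π/(4:ℝ)⁻¹ = 4*π by ring]

lemma Gt_sub (t₁ t₂ : ℝ) (h : t₁ ≤ t₂) : Gt t₁ - Gt t₂ = ∫ v in Set.Ioc t₁ t₂, gK v := by
  have hu : Set.Ioc t₁ t₂ ∪ Set.Ioi t₂ = Set.Ioi t₁ := Set.Ioc_union_Ioi_eq_Ioi h
  have hd : Disjoint (Set.Ioc t₁ t₂) (Set.Ioi t₂) := by
    rw [Set.disjoint_left]; intro v hv hv'
    exact absurd hv.2 (not_le.2 hv')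
  have := MeasureTheory.setIntegral_union hd measurableSet_Ioi
    (gK_integrableOn _) (gK_integrableOn _)
  rw [hu] at this
  rw [Gt, Gt, this]; ring

lemma Gt_anti : Antitone Gt := by
  intro t₁ t₂ h
  have := Gt_sub t₁ t₂ h
  have hpos : 0 ≤ ∫ v in Set.Ioc t₁ t₂, gK v :=
    MeasureTheory.setIntegral_nonneg measurableSet_Ioc (fun v _ => (gK_pos v).le)
  linarith

lemma intIoc_pos (t₁ t₂ : ℝ) (h : t₁ < t₂) : 0 < ∫ v in Set.Ioc t₁ t₂, gK v := by
  rw [← intervalIntegral.integral_of_le h.le]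
  exact intervalIntegral.intervalIntegral_pos_of_pos_on
    (gK_integrableOn _ |>.intervalIntegrable) (fun v _ => gK_pos v) h

lemma Gt_strictAnti : StrictAnti Gt := by
  intro t₁ t₂ h
  have h1 := Gt_sub t₁ t₂ h.le
  have := intIoc_pos t₁ t₂ h
  linarith

lemma Gt_lip (t₁ t₂ : ℝ) (h : t₁ ≤ t₂) : Gt t₁ - Gt t₂ ≤ t₂ - t₁ := by
  rw [Gt_sub t₁ t₂ h]
  calc ∫ v in Set.Ioc t₁ t₂, gK v ≤ ∫ _ in Set.Ioc t₁ t₂, (1:ℝ) :=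
        MeasureTheory.setIntegral_mono_on (gK_integrableOn _)
          (integrableOn_const (by rw [Real.volume_Ioc]; exact ENNReal.ofReal_ne_top))
          measurableSet_Ioc (fun v _ => gK_le_one v)
    _ = t₂ - t₁ := by
        rw [MeasureTheory.setIntegral_const, smul_eq_mul, mul_one, Real.volume_real_Ioc_of_le h]

lemma Gt_cont : Continuous Gt := by
  rw [Metric.continuous_iff]
  intro t ε hε
  refine ⟨ε, hε, fun t' ht' => ?_⟩
  rw [Real.dist_eq] at *
  have hd := le_abs_self (t' - t)
  have hd' := neg_abs_le (t' - t)
  rcases le_total t' t with h | h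
  · have h1 := Gt_lip t' t h
    have h2 : Gt t ≤ Gt t' := Gt_anti h
    rw [abs_lt] at ht' ⊢
    constructor <;> nlinarith
  · have h1 := Gt_lip t t' h
    have h2 : Gt t' ≤ Gt t := Gt_anti h
    rw [abs_lt] at ht' ⊢
    constructor <;> nlinarith

lemma Gt_add_Iic (t : ℝ) : Gt t + ∫ v in Set.Iic t, gK v = Real.sqrt (4 * π) := by
  rw [← gK_total, Gt]
  rw [add_comm]
  exact intervalIntegral.integral_Iic_add_Ioi (gK_integrableOn _) (gK_integrableOn _)



-- derivative of gK
lemma gK_hasDeriv (x : ℝ) : HasDerivAt gK (gK x * (-x / 2)) x := by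
  have h1 : HasDerivAt (fun v : ℝ => -v ^ 2 / 4) (-x / 2) x := by
    have := (hasDerivAt_pow 2 x).neg.div_const 4
    refine this.congr_deriv ?_
    ring
  exact h1.exp

lemma upF_hasDeriv (x : ℝ) (hx : x ≠ 0) :
    HasDerivAt (fun v => 2 / v * gK v) (-(gK x * (1 + 2 / x ^ 2))) x := by
  have h1 : HasDerivAt (fun v : ℝ => 2 / v) (2 * -(x ^ 2)⁻¹) x := by
    simpa only [div_eq_mul_inv] using (hasDerivAt_inv hx).const_mul 2
  have := h1.mul (gK_hasDeriv x)
  refine this.congr_deriv ?_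
  have hg := gK_pos x
  field_simp
  ring

lemma loF_hasDeriv (x : ℝ) :
    HasDerivAt (fun v => 2 * v / (v ^ 2 + 2) * gK v)
      (-(gK x * ((x ^ 4 + 4 * x ^ 2 - 4) / (x ^ 2 + 2) ^ 2))) x := by
  have hden : x ^ 2 + 2 ≠ 0 := by positivity
  have h1 : HasDerivAt (fun v : ℝ => 2 * v / (v ^ 2 + 2))
      ((2 * (x ^ 2 + 2) - 2 * x * (2 * x)) / (x ^ 2 + 2) ^ 2) x := by
    have hn : HasDerivAt (fun v : ℝ => 2 * v) 2 x := by
      simpa using (hasDerivAt_id x).const_mul 2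
    have hd : HasDerivAt (fun v : ℝ => v ^ 2 + 2) (2 * x) x := by
      simpa using (hasDerivAt_pow 2 x).add_const 2
    exact hn.div hd hden
  have := h1.mul (gK_hasDeriv x)
  refine this.congr_deriv ?_
  field_simp
  ring

lemma upF_tendsto : Tendsto (fun v => 2 / v * gK v) atTop (nhds 0) := by
  apply squeeze_zero' (f := fun v => 2 / v * gK v) (g := fun v => 2 / v)
  · filter_upwards [eventually_gt_atTop 0] with v hv
    have := gK_pos v
    positivity
  · filter_upwards [eventually_gt_atTop 0] with v hv
    have h1 : gK v ≤ 1 := by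
      rw [gK, Real.exp_le_one_iff]; nlinarith [sq_nonneg v]
    nlinarith [gK_pos v, div_pos (by norm_num : (0:ℝ) < 2) hv]
  · simpa using tendsto_const_nhds.div_atTop (tendsto_id (α := ℝ))

lemma loF_tendsto : Tendsto (fun v => 2 * v / (v ^ 2 + 2) * gK v) atTop (nhds 0) := by
  apply squeeze_zero' (f := _) (g := fun v => 2 / v)
  · filter_upwards [eventually_gt_atTop 0] with v hv
    have := gK_pos v
    positivity
  · filter_upwards [eventually_gt_atTop 0] with v hv
    have h1 : gK v ≤ 1 := by
      rw [gK, Real.exp_le_one_iff]; nlinarith [sq_nonneg v]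
    have h2 : 2 * v / (v ^ 2 + 2) ≤ 2 / v := by
      rw [div_le_div_iff₀ (by positivity) hv]
      nlinarith
    have h3 : 0 ≤ 2 * v / (v ^ 2 + 2) := by positivity
    nlinarith [gK_pos v]
  · simpa using tendsto_const_nhds.div_atTop (tendsto_id (α := ℝ))

lemma upF'_integrableOn (t : ℝ) (ht : 0 < t) :
    IntegrableOn (fun x => -(gK x * (1 + 2 / x ^ 2))) (Set.Ioi t) := by
  have hbd : Integrable (fun x => (1 + 2 / t ^ 2) * gK x) := gK_integrable.const_mul _
  apply (hbd.integrableOn (s := Set.Ioi t)).mono'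
  · apply Measurable.aestronglyMeasurable
    apply Measurable.neg
    apply (gK_cont.measurable).mul
    fun_prop
  · filter_upwards [ae_restrict_mem measurableSet_Ioi] with x hx
    have hx0 : t < x := hx
    have hg := gK_pos x
    rw [norm_neg, Real.norm_eq_abs, abs_of_pos (by positivity)]
    have : 2 / x ^ 2 ≤ 2 / t ^ 2 := by
      apply div_le_div_of_nonneg_left (by norm_num) (by positivity)
      nlinarith
    nlinarith

lemma loF'_integrableOn (t : ℝ) :
    IntegrableOn (fun x => -(gK x * ((x ^ 4 + 4 * x ^ 2 - 4) / (x ^ 2 + 2) ^ 2))) (Set.Ioi t) := by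
  apply (gK_integrableOn (Set.Ioi t)).mono'
  · apply Measurable.aestronglyMeasurable
    apply Measurable.neg
    apply (gK_cont.measurable).mul
    fun_prop
  · filter_upwards with x
    have hg := gK_pos x
    rw [norm_neg, Real.norm_eq_abs, abs_mul, abs_of_pos hg]
    have hden : (0:ℝ) < (x ^ 2 + 2) ^ 2 := by positivity
    have : |(x ^ 4 + 4 * x ^ 2 - 4) / (x ^ 2 + 2) ^ 2| ≤ 1 := by
      rw [abs_div, abs_of_pos hden, div_le_one hden, abs_le]
      constructor <;> nlinarith [sq_nonneg x]
    nlinarith [abs_nonneg ((x ^ 4 + 4 * x ^ 2 - 4) / (x ^ 2 + 2) ^ 2)]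

lemma Gt_le (t : ℝ) (ht : 0 < t) : Gt t ≤ 2 / t * gK t := by
  have key : ∫ x in Set.Ioi t, -(gK x * (1 + 2 / x ^ 2)) = 0 - 2 / t * gK t := by
    apply integral_Ioi_of_hasDerivAt_of_tendsto' (f := fun v => 2 / v * gK v)
    · intro x hx
      exact upF_hasDeriv x (by have : t ≤ x := hx; linarith)
    · exact upF'_integrableOn t ht
    · exact upF_tendsto
  have mono : Gt t ≤ ∫ x in Set.Ioi t, gK x * (1 + 2 / x ^ 2) := by
    apply MeasureTheory.setIntegral_mono_on (gK_integrableOn _)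
      ((upF'_integrableOn t ht).neg.congr ?_) measurableSet_Ioi
    · intro x hx
      have hx0 : 0 < x := lt_trans ht hx
      have hg := gK_pos x
      nlinarith [div_pos (by norm_num : (0:ℝ) < 2) (by positivity : (0:ℝ) < x ^ 2)]
    · filter_upwards with x
      simp only [Pi.neg_apply, neg_neg]
  have : ∫ x in Set.Ioi t, gK x * (1 + 2 / x ^ 2)
      = -∫ x in Set.Ioi t, -(gK x * (1 + 2 / x ^ 2)) := by
    rw [MeasureTheory.integral_neg, neg_neg]
  rw [this, key] at mono
  linarith

lemma Gt_ge (t : ℝ) (ht : 0 < t) : 2 * t / (t ^ 2 + 2) * gK t ≤ Gt t := by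
  have key : ∫ x in Set.Ioi t, -(gK x * ((x ^ 4 + 4 * x ^ 2 - 4) / (x ^ 2 + 2) ^ 2))
      = 0 - 2 * t / (t ^ 2 + 2) * gK t := by
    apply integral_Ioi_of_hasDerivAt_of_tendsto' (f := fun v => 2 * v / (v ^ 2 + 2) * gK v)
    · intro x _; exact loF_hasDeriv x
    · exact loF'_integrableOn t
    · exact loF_tendsto
  have key2 : ∫ x in Set.Ioi t, gK x * ((x ^ 4 + 4 * x ^ 2 - 4) / (x ^ 2 + 2) ^ 2)
      = 2 * t / (t ^ 2 + 2) * gK t := by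
    have : ∫ x in Set.Ioi t, gK x * ((x ^ 4 + 4 * x ^ 2 - 4) / (x ^ 2 + 2) ^ 2)
        = -∫ x in Set.Ioi t, -(gK x * ((x ^ 4 + 4 * x ^ 2 - 4) / (x ^ 2 + 2) ^ 2)) := by
      rw [MeasureTheory.integral_neg, neg_neg]
    rw [this, key]; ring
  have mono : ∫ x in Set.Ioi t, gK x * ((x ^ 4 + 4 * x ^ 2 - 4) / (x ^ 2 + 2) ^ 2) ≤ Gt t := by
    apply MeasureTheory.setIntegral_mono_on
      ((loF'_integrableOn t).neg.congr (by
        filter_upwards with x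
        simp only [Pi.neg_apply, neg_neg]))
      (gK_integrableOn _) measurableSet_Ioi
    intro x _
    have hg := gK_pos x
    have hden : (0:ℝ) < (x ^ 2 + 2) ^ 2 := by positivity
    have hq : (x ^ 4 + 4 * x ^ 2 - 4) / (x ^ 2 + 2) ^ 2 ≤ 1 := by
      rw [div_le_one hden]; nlinarith [sq_nonneg x]
    nlinarith [mul_le_mul_of_nonneg_left hq hg.le]
  rw [key2] at mono
  exact mono

lemma Gt_pos (t : ℝ) : 0 < Gt t := by
  have h1 : Gt t ≥ Gt (|t| + 1) := Gt_anti (by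
    have := le_abs_self t; linarith)
  have h2 : 0 < |t| + 1 := by positivity
  have := Gt_ge (|t| + 1) h2
  have := gK_pos (|t| + 1)
  nlinarith [div_pos (by positivity : (0:ℝ) < 2 * (|t| + 1)) (by positivity : (0:ℝ) < (|t| + 1) ^ 2 + 2)]

lemma Gt_lt_total (t : ℝ) : Gt t < Real.sqrt (4 * π) := by
  have h := Gt_add_Iic t
  have h2 : 0 < ∫ v in Set.Iic t, gK v := by
    have sub : 0 < ∫ v in Set.Ioc (t - 1) t, gK v := intIoc_pos _ _ (by linarith)
    have : ∫ v in Set.Ioc (t - 1) t, gK v ≤ ∫ v in Set.Iic t, gK v := by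
      apply MeasureTheory.setIntegral_mono_set (gK_integrableOn _)
      · filter_upwards with v; exact (gK_pos v).le
      · filter_upwards with v hv; exact hv.2
    linarith
  linarith




def cK : ℝ := (4 * Real.pi) ^ (-(1:ℝ) / 2)

lemma cK_pos : 0 < cK := Real.rpow_pos_of_pos (by positivity) _

lemma cK_total : cK * Real.sqrt (4 * π) = 1 := by
  rw [cK, Real.sqrt_eq_rpow, ← Real.rpow_add (by positivity)]
  norm_num

lemma gK_even (v : ℝ) : gK (-v) = gK v := by
  rw [gK, gK]; ring_nf

lemma int_Iic_eq (t : ℝ) : ∫ v in Set.Iic t, gK v = Gt (-t) := by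
  have h := integral_comp_neg_Iic t gK
  rw [Gt, ← h]
  congr 1
  ext v
  rw [gK_even]

lemma int_shift (s : ℝ) : ∫ x in Set.Ioi (0:ℝ), gK (x - s) = Gt (-s) := by
  have A : MeasurableEmbedding (fun x : ℝ => x + -s) :=
    (Homeomorph.addRight (-s)).isClosedEmbedding.measurableEmbedding
  have B := A.setIntegral_map (g := gK) (s := Set.Ioi (-s)) (μ := volume)
  rw [map_add_right_eq_self volume (-s)] at B
  have hpre : (fun x : ℝ => x + -s) ⁻¹' Set.Ioi (-s) = Set.Ioi (0:ℝ) := by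
    ext x; simp [Set.mem_Ioi]
  rw [hpre] at B
  rw [Gt, B]
  apply MeasureTheory.setIntegral_congr_fun measurableSet_Ioi
  intro x _
  simp only [sub_eq_add_neg]

lemma Efun_eq (s : ℝ) : Efun s = cK * Gt (-s) := by
  rw [Efun, ← cK, ← int_shift s]
  congr 1
  apply MeasureTheory.setIntegral_congr_fun measurableSet_Ioi
  intro x _
  simp only [gK]
  congr 1
  ring

lemma Efun_strictMono : StrictMono Efun := by
  intro s₁ s₂ h
  rw [Efun_eq, Efun_eq]
  exact mul_lt_mul_of_pos_left (Gt_strictAnti (by linarith : -s₂ < -s₁)) cK_pos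

lemma Efun_pos (s : ℝ) : 0 < Efun s := by
  rw [Efun_eq]; exact mul_pos cK_pos (Gt_pos _)

lemma Efun_lt_one (s : ℝ) : Efun s < 1 := by
  rw [Efun_eq, ← cK_total]
  exact mul_lt_mul_of_pos_left (Gt_lt_total _) cK_pos

lemma Efun_cont : Continuous Efun := by
  have : Continuous fun s : ℝ => cK * Gt (-s) := by
    exact continuous_const.mul (Gt_cont.comp continuous_neg)
  exact this.congr (fun s => (Efun_eq s).symm)

lemma Efun_neg_le (t : ℝ) (ht : 0 < t) : Efun (-t) ≤ cK * (2 / t) := by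
  rw [Efun_eq, neg_neg]
  have h1 := Gt_le t ht
  have h2 := gK_le_one t
  have h3 := gK_pos t
  have h4 : (0:ℝ) < 2 / t := by positivity
  have h5 : Gt t ≤ 2 / t := by nlinarith
  exact mul_le_mul_of_nonneg_left h5 cK_pos.le

lemma Efun_ge (t : ℝ) (ht : 0 < t) : 1 - cK * (2 / t) ≤ Efun t := by
  rw [Efun_eq]
  have h : Gt (-t) = Real.sqrt (4 * π) - Gt t := by
    have h1 := Gt_add_Iic t
    rw [int_Iic_eq] at h1
    linarith
  rw [h, mul_sub, cK_total]
  have h1 := Gt_le t ht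
  have h2 := gK_le_one t
  have h3 := gK_pos t
  have h4 : (0:ℝ) < 2 / t := by positivity
  have h5 : Gt t ≤ 2 / t := by nlinarith
  have := mul_le_mul_of_nonneg_left h5 cK_pos.le
  linarith

lemma Efun_surj {r : ℝ} (h0 : 0 < r) (h1 : r < 1) : ∃ s, Efun s = r := by
  set t₁ : ℝ := max 1 (4 * cK / r) with ht₁def
  set t₂ : ℝ := max 1 (4 * cK / (1 - r)) with ht₂def
  have ht₁ : 0 < t₁ := lt_of_lt_of_le one_pos (le_max_left _ _)
  have ht₂ : 0 < t₂ := lt_of_lt_of_le one_pos (le_max_left _ _)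
  have hlow : Efun (-t₁) < r := by
    have h2 := Efun_neg_le t₁ ht₁
    have h3 : 4 * cK / r ≤ t₁ := le_max_right _ _
    have : cK * (2 / t₁) < r := by
      rw [mul_div_assoc'] at *
      rw [div_lt_iff₀ ht₁]
      have h5 : 4 * cK / r * r = 4 * cK := by field_simp
      nlinarith [cK_pos, mul_le_mul_of_nonneg_right h3 h0.le]
    linarith
  have hhigh : r < Efun t₂ := by
    have h2 := Efun_ge t₂ ht₂
    have h3 : 4 * cK / (1 - r) ≤ t₂ := le_max_right _ _
    have h1r : 0 < 1 - r := by linarith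
    have : cK * (2 / t₂) < 1 - r := by
      rw [mul_div_assoc', div_lt_iff₀ ht₂]
      have h5 : 4 * cK / (1 - r) * (1 - r) = 4 * cK := by field_simp
      nlinarith [cK_pos, mul_le_mul_of_nonneg_right h3 h1r.le]
    linarith
  have hle : -t₁ ≤ t₂ := by linarith
  have := intermediate_value_Icc hle Efun_cont.continuousOn
  have hr : r ∈ Set.Icc (Efun (-t₁)) (Efun t₂) := ⟨hlow.le, hhigh.le⟩
  obtain ⟨s, _, hs⟩ := this hr
  exact ⟨s, hs⟩

lemma Hfun_Efun (s : ℝ) : Hfun (Efun s) = s :=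
  Function.leftInverse_invFun Efun_strictMono.injective s

lemma Efun_Hfun {r : ℝ} (h0 : 0 < r) (h1 : r < 1) : Efun (Hfun r) = r :=
  Function.invFun_eq (Efun_surj h0 h1)



lemma gK_shift (t d : ℝ) : gK (t + d) = gK t * Real.exp (-(2 * t * d + d ^ 2) / 4) := by
  rw [gK, gK, ← Real.exp_add]
  congr 1
  ring

lemma lam_ge (t : ℝ) (ht : 0 < t) : 2 * t / (t ^ 2 + 2) ≤ Gt t / gK t := by
  rw [le_div_iff₀ (gK_pos t)]
  exact Gt_ge t ht

lemma lam_le (t : ℝ) (ht : 0 < t) : Gt t / gK t ≤ 2 / t := by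
  rw [div_le_iff₀ (gK_pos t)]
  exact Gt_le t ht

lemma key_upper (M t Δ : ℝ) (hM : 0 ≤ M) (ht : 1 ≤ t) (hΔ0 : 0 ≤ Δ) (hΔM : Δ ≤ M) :
    Gt (t + Gt t / gK t * Δ) ≤
      Real.exp (-Δ) * (Real.exp (2 * M / t ^ 2) * (1 + 2 / t ^ 2)) * Gt t := by
  have ht0 : (0:ℝ) < t := by linarith
  set lam := Gt t / gK t with hlamdef
  have hlam0 : 0 < lam := div_pos (Gt_pos t) (gK_pos t)
  set d := lam * Δ with hd
  have hd0 : 0 ≤ d := mul_nonneg hlam0.le hΔ0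
  have htd : 0 < t + d := by linarith
  have hg := gK_pos t
  have hexp : Δ - t * d / 2 ≤ 2 * M / t ^ 2 := by
    have h1 : Δ * (2 * t / (t ^ 2 + 2)) ≤ Δ * lam :=
      mul_le_mul_of_nonneg_left (lam_ge t ht0) hΔ0
    have h2 : t * (Δ * (2 * t / (t ^ 2 + 2))) / 2 ≤ t * d / 2 := by
      rw [hd]; nlinarith
    have h3 : Δ - t * (Δ * (2 * t / (t ^ 2 + 2))) / 2 = 2 * Δ / (t ^ 2 + 2) := by
      field_simp; ring
    have h4 : 2 * Δ / (t ^ 2 + 2) ≤ 2 * M / t ^ 2 := by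
      rw [div_le_div_iff₀ (by positivity) (by positivity)]
      nlinarith
    linarith
  calc Gt (t + d) ≤ 2 / (t + d) * gK (t + d) := Gt_le _ htd
    _ = 2 / (t + d) * gK t * Real.exp (-(2 * t * d + d ^ 2) / 4) := by
        rw [gK_shift]; ring
    _ ≤ 2 / t * gK t * Real.exp (-(t * d) / 2) := by
        have e1 : Real.exp (-(2 * t * d + d ^ 2) / 4) ≤ Real.exp (-(t * d) / 2) := by
          apply Real.exp_le_exp.2
          nlinarith [sq_nonneg d]
        have e2 : 2 / (t + d) ≤ 2 / t :=
          div_le_div_of_nonneg_left (by norm_num) ht0 (by linarith)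
        apply mul_le_mul (mul_le_mul e2 le_rfl hg.le (by positivity)) e1
          (Real.exp_pos _).le (by positivity)
    _ ≤ 2 / t * gK t * Real.exp (-Δ + 2 * M / t ^ 2) := by
        apply mul_le_mul_of_nonneg_left (Real.exp_le_exp.2 (by linarith)) (by positivity)
    _ = Real.exp (-Δ) * (Real.exp (2 * M / t ^ 2) * (1 + 2 / t ^ 2))
          * (2 * t / (t ^ 2 + 2) * gK t) := by
        rw [Real.exp_add]
        field_simp
    _ ≤ Real.exp (-Δ) * (Real.exp (2 * M / t ^ 2) * (1 + 2 / t ^ 2)) * Gt t := by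
        apply mul_le_mul_of_nonneg_left (Gt_ge t ht0) (by positivity)

lemma key_lower (M t Δ : ℝ) (hM : 0 ≤ M) (ht : 1 ≤ t) (hΔ0 : 0 ≤ Δ) (hΔM : Δ ≤ M) :
    Real.exp (-Δ) * (Real.exp (-(M ^ 2 / t ^ 2)) * (t ^ 2 / ((t + 2 * M / t) ^ 2 + 2))) * Gt t
      ≤ Gt (t + Gt t / gK t * Δ) := by
  have ht0 : (0:ℝ) < t := by linarith
  set lam := Gt t / gK t with hlamdef
  have hlam0 : 0 < lam := div_pos (Gt_pos t) (gK_pos t)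
  set d := lam * Δ with hd
  have hd0 : 0 ≤ d := mul_nonneg hlam0.le hΔ0
  have htd : 0 < t + d := by linarith
  have hg := gK_pos t
  have hdle : d ≤ 2 * M / t := by
    have h1 : lam * Δ ≤ (2 / t) * Δ := mul_le_mul_of_nonneg_right (lam_le t ht0) hΔ0
    have h2 : (2 / t) * Δ ≤ (2 / t) * M := mul_le_mul_of_nonneg_left hΔM (by positivity)
    rw [hd]
    calc lam * Δ ≤ (2 / t) * Δ := h1
      _ ≤ (2 / t) * M := h2
      _ = 2 * M / t := by ring
  have hexp2 : -Δ - M ^ 2 / t ^ 2 ≤ -(2 * t * d + d ^ 2) / 4 := by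
    have h1 : t * d / 2 ≤ Δ := by
      have := mul_le_mul_of_nonneg_right (lam_le t ht0) hΔ0
      rw [hd]
      have ht' : t ≠ 0 := ne_of_gt ht0
      have : t * (lam * Δ) ≤ t * ((2 / t) * Δ) := mul_le_mul_of_nonneg_left this ht0.le
      have he : t * ((2 / t) * Δ) = 2 * Δ := by field_simp
      nlinarith
    have h2 : d ^ 2 / 4 ≤ M ^ 2 / t ^ 2 := by
      have hMt : 0 ≤ 2 * M / t := by positivity
      have : d ^ 2 ≤ (2 * M / t) ^ 2 := by nlinarith
      have he : (2 * M / t) ^ 2 = 4 * (M ^ 2 / t ^ 2) := by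
        field_simp; ring
      nlinarith
    linarith
  have hfront : 2 * t / ((t + 2 * M / t) ^ 2 + 2) ≤ 2 * (t + d) / ((t + d) ^ 2 + 2) := by
    apply div_le_div₀ (by positivity) (by linarith) (by positivity)
    nlinarith [sq_nonneg (t + d)]
  calc Real.exp (-Δ) * (Real.exp (-(M ^ 2 / t ^ 2)) * (t ^ 2 / ((t + 2 * M / t) ^ 2 + 2))) * Gt t
      ≤ Real.exp (-Δ) * (Real.exp (-(M ^ 2 / t ^ 2)) * (t ^ 2 / ((t + 2 * M / t) ^ 2 + 2)))
          * (2 / t * gK t) := by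
        apply mul_le_mul_of_nonneg_left (Gt_le t ht0) (by positivity)
    _ = 2 * t / ((t + 2 * M / t) ^ 2 + 2) * gK t * Real.exp (-Δ - M ^ 2 / t ^ 2) := by
        rw [show Real.exp (-Δ - M ^ 2 / t ^ 2) = Real.exp (-Δ) * Real.exp (-(M ^ 2 / t ^ 2)) by
          rw [← Real.exp_add]; congr 1]
        field_simp
    _ ≤ 2 * (t + d) / ((t + d) ^ 2 + 2) * gK t * Real.exp (-(2 * t * d + d ^ 2) / 4) := by
        apply mul_le_mul (mul_le_mul hfront le_rfl hg.le (by positivity))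
          (Real.exp_le_exp.2 hexp2) (Real.exp_pos _).le (by positivity)
    _ = 2 * (t + d) / ((t + d) ^ 2 + 2) * gK (t + d) := by
        rw [gK_shift]; ring
    _ ≤ Gt (t + d) := Gt_ge _ htd


end S7

open S7

set_option maxHeartbeats 2000000 in
/-- any bounded log-concave function on a nonempty open convex `Ω ⊆ ℝⁿ` is the
uniform limit as `a → ∞` of `H_a`-concave functions. -/
theorem stmt7 (n : ℕ) (hn : 1 ≤ n)
    (Ω : Set (Euc n)) (hne : Ω.Nonempty) (hop : IsOpen Ω) (hconv : Convex ℝ Ω)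
    (f : Euc n → ℝ) (hf0 : ∀ x ∈ Ω, 0 ≤ f x) (hfb : ∃ C : ℝ, ∀ x ∈ Ω, f x ≤ C)
    (hlc : FConcaveOn Ω elog f) :
    ∃ fa : ℝ → Euc n → ℝ,
      (∀ a : ℝ, 0 < a →
        (∀ x ∈ Ω, 0 ≤ fa a x ∧ fa a x < a) ∧ FConcaveOn Ω (Ha (a : EReal)) (fa a)) ∧
      TendstoUniformlyOn fa f Filter.atTop Ω := by
  classical
  obtain ⟨C, hC⟩ := hfb
  set B : ℝ := max C 1 with hBdef
  have hB : (0:ℝ) < B := lt_of_lt_of_le one_pos (le_max_right _ _)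
  have hfB : ∀ x ∈ Ω, f x ≤ B := fun x hx => le_trans (hC x hx) (le_max_left _ _)
  set tA : ℝ → ℝ := fun a => -Hfun (B / a) with htAdef
  set lam : ℝ → ℝ := fun a => Gt (tA a) / gK (tA a) with hlamdef
  have hlam : ∀ a, 0 < lam a := fun a => div_pos (Gt_pos _) (gK_pos _)
  set fa : ℝ → Euc n → ℝ := fun a x =>
    if B < a ∧ 0 < f x then a * Efun (lam a * (Real.log (f x) - Real.log B) - tA a) else 0
    with hfadef
  have hID : ∀ a : ℝ, B < a → a * (cK * Gt (tA a)) = B := by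
    intro a hBa
    have ha : 0 < a := lt_trans hB hBa
    have h0 : 0 < B / a := div_pos hB ha
    have h1 : B / a < 1 := (div_lt_one ha).2 hBa
    have h2 : Efun (Hfun (B / a)) = B / a := Efun_Hfun h0 h1
    have h3 : Efun (Hfun (B / a)) = cK * Gt (tA a) := by
      rw [Efun_eq]
    rw [← h3, h2]
    field_simp
  have hfa_eq : ∀ a : ℝ, B < a → ∀ x : Euc n, 0 < f x →
      fa a x = a * (cK * Gt (tA a + lam a * (Real.log B - Real.log (f x)))) := by
    intro a hBa x hfx
    rw [hfadef]
    simp only [if_pos (⟨hBa, hfx⟩ : B < a ∧ 0 < f x)]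
    rw [Efun_eq]
    have harg : -(lam a * (Real.log (f x) - Real.log B) - tA a)
        = tA a + lam a * (Real.log B - Real.log (f x)) := by ring
    rw [harg]
  have hHa : ∀ a : ℝ, 0 < a → ∀ s : ℝ, Ha (a : EReal) (a * Efun s) = (s : EReal) := by
    intro a ha s
    have h1 : 0 < a * Efun s := mul_pos ha (Efun_pos s)
    rw [Ha, if_pos h1, if_neg (EReal.coe_ne_top a), EReal.toReal_coe,
      mul_div_cancel_left₀ _ (ne_of_gt ha), Hfun_Efun]
  refine ⟨fa, ?_, ?_⟩
  · intro a ha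
    constructor
    · intro x hx
      by_cases h : B < a ∧ 0 < f x
      · rw [hfadef]
        simp only [if_pos h]
        have ha2 : 0 < a := lt_trans hB h.1
        refine ⟨(mul_pos ha2 (Efun_pos _)).le, ?_⟩
        have := Efun_lt_one (lam a * (Real.log (f x) - Real.log B) - tA a)
        nlinarith [Efun_pos (lam a * (Real.log (f x) - Real.log B) - tA a)]
      · rw [hfadef]
        simp only [if_neg h]
        exact ⟨le_refl 0, ha⟩
    · intro x hx y hy τ hτ
      obtain ⟨hτ0, hτ1⟩ := hτ
      have hbot1 : ∀ X : EReal, ((1 - τ : ℝ) : EReal) * (⊥ : EReal) + X = ⊥ := by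
        intro X
        rw [EReal.coe_mul_bot_of_pos (by linarith : (0:ℝ) < 1 - τ), EReal.bot_add]
      have hbot2 : ∀ X : EReal, X + ((τ : ℝ) : EReal) * (⊥ : EReal) = ⊥ := by
        intro X
        rw [EReal.coe_mul_bot_of_pos hτ0, EReal.add_bot]
      by_cases hBa : B < a
      · by_cases hfx : 0 < f x
        · by_cases hfy : 0 < f y
          · -- main case
            have hlog' := hlc x hx y hy τ ⟨hτ0, hτ1⟩
            have hfz : 0 < f ((1 - τ) • x + τ • y) := by
              by_contra hc
              simp only [elog, if_pos hfx, if_pos hfy, if_neg hc] at hlog'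
              rw [← EReal.coe_mul, ← EReal.coe_mul, ← EReal.coe_add] at hlog'
              exact EReal.coe_ne_bot _ (le_bot_iff.1 hlog')
            simp only [elog, if_pos hfx, if_pos hfy, if_pos hfz] at hlog'
            rw [← EReal.coe_mul, ← EReal.coe_mul, ← EReal.coe_add,
              EReal.coe_le_coe_iff] at hlog'
            have ha0 : 0 < a := lt_trans hB hBa
            rw [hfadef]
            simp only [if_pos (⟨hBa, hfx⟩ : B < a ∧ 0 < f x),
              if_pos (⟨hBa, hfy⟩ : B < a ∧ 0 < f y),
              if_pos (⟨hBa, hfz⟩ : B < a ∧ 0 < f ((1 - τ) • x + τ • y))]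
            rw [hHa a ha0, hHa a ha0, hHa a ha0,
              ← EReal.coe_mul, ← EReal.coe_mul, ← EReal.coe_add, EReal.coe_le_coe_iff]
            nlinarith [mul_le_mul_of_nonneg_left hlog' (hlam a).le]
          · have h0 : fa a y = 0 := by
              rw [hfadef]; simp only [if_neg (fun hc : B < a ∧ 0 < f y => hfy hc.2)]
            rw [h0]
            have : Ha (a : EReal) 0 = ⊥ := by simp [Ha]
            rw [this, hbot2]
            exact bot_le
        · have h0 : fa a x = 0 := by
            rw [hfadef]; simp only [if_neg (fun hc : B < a ∧ 0 < f x => hfx hc.2)]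
          rw [h0]
          have : Ha (a : EReal) 0 = ⊥ := by simp [Ha]
          rw [this, hbot1]
          exact bot_le
      · have h0 : ∀ z : Euc n, fa a z = 0 := by
          intro z
          rw [hfadef]; simp only [if_neg (fun hc : B < a ∧ 0 < f z => hBa hc.1)]
        rw [h0, h0]
        have : Ha (a : EReal) 0 = ⊥ := by simp [Ha]
        rw [this, hbot1]
        exact bot_le
  · rw [Metric.tendstoUniformlyOn_iff]
    intro ε hε
    set δ : ℝ := min (ε / 4) B with hδdef
    have hδ0 : 0 < δ := lt_min (by linarith) hB
    have hδB : δ ≤ B := min_le_right _ _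
    have hδε : δ ≤ ε / 4 := min_le_left _ _
    set M : ℝ := Real.log (B / δ) with hMdef
    have hM : 0 ≤ M := Real.log_nonneg ((one_le_div hδ0).2 hδB)
    have hexpM : Real.exp (-M) = δ / B := by
      rw [hMdef, Real.exp_neg, Real.exp_log (div_pos hB hδ0)]
      rw [inv_div]
    -- tA tends to infinity
    have htt : Tendsto tA atTop atTop := by
      rw [tendsto_atTop]
      intro T
      have hGT : 0 < cK * Gt T := mul_pos cK_pos (Gt_pos T)
      filter_upwards [eventually_gt_atTop (max B (B / (cK * Gt T)))] with a ha
      have hBa : B < a := lt_of_le_of_lt (le_max_left _ _) ha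
      have ha0 : 0 < a := lt_trans hB hBa
      have h1 : B / a < cK * Gt T := by
        rw [div_lt_iff₀ ha0]
        have h2 : B / (cK * Gt T) < a := lt_of_le_of_lt (le_max_right _ _) ha
        calc B = B / (cK * Gt T) * (cK * Gt T) := by rw [div_mul_cancel₀ _ hGT.ne']
          _ < a * (cK * Gt T) := mul_lt_mul_of_pos_right h2 hGT
          _ = cK * Gt T * a := by ring
      have h2 : cK * Gt (tA a) = B / a := by
        rw [eq_div_iff (ne_of_gt ha0)]
        linear_combination hID a hBa
      by_contra hc
      push_neg at hc
      have h3 : Gt T ≤ Gt (tA a) := Gt_anti hc.le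
      have h4 := mul_le_mul_of_nonneg_left h3 cK_pos.le
      linarith
    -- limits of the bound functions
    have h2t' : Tendsto (fun t : ℝ => 2 / t ^ 2) atTop (nhds 0) :=
      tendsto_const_nhds.div_atTop (tendsto_pow_atTop two_ne_zero)
    have h2Mt2 : Tendsto (fun t : ℝ => 2 * M / t ^ 2) atTop (nhds 0) :=
      tendsto_const_nhds.div_atTop (tendsto_pow_atTop two_ne_zero)
    have hMt2 : Tendsto (fun t : ℝ => M ^ 2 / t ^ 2) atTop (nhds 0) :=
      tendsto_const_nhds.div_atTop (tendsto_pow_atTop two_ne_zero)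
    have hU : Tendsto (fun t : ℝ => Real.exp (2 * M / t ^ 2) * (1 + 2 / t ^ 2))
        atTop (nhds 1) := by
      have e1 : Tendsto (fun t : ℝ => Real.exp (2 * M / t ^ 2)) atTop (nhds 1) := by
        have := (Real.continuous_exp.tendsto 0).comp h2Mt2
        simpa [Function.comp_def] using this
      have e2 : Tendsto (fun t : ℝ => 1 + 2 / t ^ 2) atTop (nhds 1) := by
        simpa using tendsto_const_nhds.add h2t'
      simpa using e1.mul e2
    have hL : Tendsto (fun t : ℝ =>
        Real.exp (-(M ^ 2 / t ^ 2)) * (t ^ 2 / ((t + 2 * M / t) ^ 2 + 2))) atTop (nhds 1) := by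
      have hMt2n : Tendsto (fun t : ℝ => -(M ^ 2 / t ^ 2)) atTop (nhds 0) := by
        simpa using hMt2.neg
      have e1 : Tendsto (fun t : ℝ => Real.exp (-(M ^ 2 / t ^ 2))) atTop (nhds 1) := by
        have := (Real.continuous_exp.tendsto 0).comp hMt2n
        simpa [Function.comp_def] using this
      have e2 : Tendsto (fun t : ℝ => t ^ 2 / ((t + 2 * M / t) ^ 2 + 2)) atTop (nhds 1) := by
        have e4 : Tendsto (fun t : ℝ => (1 + 2 * M / t ^ 2) ^ 2 + 2 / t ^ 2) atTop (nhds 1) := by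
          have e5 : Tendsto (fun t : ℝ => 1 + 2 * M / t ^ 2) atTop (nhds 1) := by
            simpa using tendsto_const_nhds.add h2Mt2
          have := (e5.pow 2).add h2t'
          simpa using this
        have e3 : Tendsto (fun t : ℝ => ((1 + 2 * M / t ^ 2) ^ 2 + 2 / t ^ 2)⁻¹)
            atTop (nhds 1) := by
          simpa using e4.inv₀ one_ne_zero
        apply e3.congr'
        filter_upwards [eventually_gt_atTop 0] with t ht
        have hd1 : ((t + 2 * M / t) ^ 2 + 2) ≠ 0 := by positivity
        have hd2 : ((1 + 2 * M / t ^ 2) ^ 2 + 2 / t ^ 2) ≠ 0 := by positivity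
        have ht' : t ≠ 0 := ne_of_gt ht
        field_simp
      simpa using e1.mul e2
    have hε4B : 0 < ε / (4 * B) := by positivity
    have evU1 := hU.eventually_lt_const (by linarith : (1:ℝ) < 1 + ε / (4 * B))
    have evU2 := hU.eventually_lt_const (by norm_num : (1:ℝ) < 2)
    have evL := hL.eventually_const_lt (by linarith : 1 - ε / (4 * B) < (1:ℝ))
    clear_value B δ M
    filter_upwards [eventually_gt_atTop B,
      htt.eventually (evU1.and (evU2.and (evL.and (eventually_ge_atTop 1))))] with a hBa hta
    obtain ⟨hU1a, hU2a, hLa, h1ta⟩ := hta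
    intro x hx
    rw [Real.dist_eq]
    by_cases hfx : 0 < f x
    · have ha0 : 0 < a := lt_trans hB hBa
      have hacK : (0:ℝ) < a * cK := mul_pos ha0 cK_pos
      have hfaeq0 := hfa_eq a hBa x hfx
      have hIDa0 := hID a hBa
      have hlapos0 := hlam a
      set la : ℝ := lam a with hladef
      set t : ℝ := tA a with htdef
      set Δ : ℝ := Real.log B - Real.log (f x) with hΔdef
      set F : ℝ := fa a x with hFdef
      have hla_eq : la = Gt t / gK t := by rw [hladef, hlamdef]
      have hΔ0 : 0 ≤ Δ := by
        have := Real.log_le_log hfx (hfB x hx)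
        rw [hΔdef]; linarith
      have hfxB : f x ≤ B := hfB x hx
      have hfx_eq : f x = B * Real.exp (-Δ) := by
        rw [hΔdef, neg_sub, Real.exp_sub, Real.exp_log hfx, Real.exp_log hB]
        field_simp
      clear_value la t Δ F
      clear hfaeq0 hIDa0
      have hfaeq : F = a * (cK * Gt (t + la * Δ)) := by
        rw [hFdef]
        have h := hfa_eq a hBa x hfx
        rw [htdef, hladef, hΔdef]
        exact h
      have hIDa : a * (cK * Gt t) = B := by
        rw [htdef]; exact hID a hBa
      have hlapos : 0 < la := by rw [hladef]; exact hlam a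
      clear hfa_eq hID hlc hC hfadef hladef htdef hΔdef hFdef hδdef hMdef hBdef
      clear htt hU hL h2t' h2Mt2 hMt2 hlam
      clear fa hlamdef lam htAdef tA
      by_cases hΔM : Δ ≤ M
      · have hup := key_upper M t Δ hM h1ta hΔ0 hΔM
        have hlo := key_lower M t Δ hM h1ta hΔ0 hΔM
        rw [← hla_eq] at hup hlo
        have hup' : F ≤ f x * (Real.exp (2 * M / t ^ 2) * (1 + 2 / t ^ 2)) := by
          rw [hfaeq, hfx_eq]
          have h5 := mul_le_mul_of_nonneg_left hup hacK.le
          calc a * (cK * Gt (t + la * Δ)) = a * cK * Gt (t + la * Δ) := by ring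
            _ ≤ a * cK * (Real.exp (-Δ) * (Real.exp (2 * M / t ^ 2) * (1 + 2 / t ^ 2)) * Gt t)
                := h5
            _ = B * Real.exp (-Δ) * (Real.exp (2 * M / t ^ 2) * (1 + 2 / t ^ 2)) := by
                rw [← hIDa]; ring
        have hlo' : f x * (Real.exp (-(M ^ 2 / t ^ 2)) * (t ^ 2 / ((t + 2 * M / t) ^ 2 + 2)))
            ≤ F := by
          rw [hfaeq, hfx_eq]
          have h5 := mul_le_mul_of_nonneg_left hlo hacK.le
          calc B * Real.exp (-Δ)
                * (Real.exp (-(M ^ 2 / t ^ 2)) * (t ^ 2 / ((t + 2 * M / t) ^ 2 + 2)))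
              = a * cK * (Real.exp (-Δ)
                * (Real.exp (-(M ^ 2 / t ^ 2)) * (t ^ 2 / ((t + 2 * M / t) ^ 2 + 2))) * Gt t)
                := by rw [← hIDa]; ring
            _ ≤ a * cK * Gt (t + la * Δ) := h5
            _ = a * (cK * Gt (t + la * Δ)) := by ring
        rw [abs_lt]
        have hUge1 : 1 ≤ Real.exp (2 * M / t ^ 2) * (1 + 2 / t ^ 2) := by
          have e1 : 1 ≤ Real.exp (2 * M / t ^ 2) := Real.one_le_exp (by positivity)
          have e2 : (1:ℝ) ≤ 1 + 2 / t ^ 2 := le_add_of_nonneg_right (by positivity)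
          simpa using mul_le_mul e1 e2 zero_le_one (le_trans zero_le_one e1)
        have hBε : B * (ε / (4 * B)) = ε / 4 := by field_simp
        constructor
        · -- -ε < f x - F, i.e. F - f x < ε
          have h6 : F - f x ≤ f x * (Real.exp (2 * M / t ^ 2) * (1 + 2 / t ^ 2) - 1) := by
            have := hup'
            ring_nf at this ⊢
            linarith
          have h7 : f x * (Real.exp (2 * M / t ^ 2) * (1 + 2 / t ^ 2) - 1)
              ≤ B * (Real.exp (2 * M / t ^ 2) * (1 + 2 / t ^ 2) - 1) := by
            apply mul_le_mul_of_nonneg_right hfxB (by linarith)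
          have h8 : B * (Real.exp (2 * M / t ^ 2) * (1 + 2 / t ^ 2) - 1) < ε / 4 := by
            have h10 := mul_lt_mul_of_pos_left hU1a hB
            have h11 : B * (1 + ε / (4 * B)) = B + ε / 4 := by field_simp
            nlinarith
          linarith
        · -- f x - F < ε
          set L : ℝ := Real.exp (-(M ^ 2 / t ^ 2)) * (t ^ 2 / ((t + 2 * M / t) ^ 2 + 2))
            with hLdef
          have h6 : f x - F ≤ f x * (1 - L) := by
            have := hlo'
            ring_nf at this ⊢
            linarith
          rcases le_or_gt L 1 with hL1 | hL1
          · have h7 : f x * (1 - L) ≤ B * (1 - L) :=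
              mul_le_mul_of_nonneg_right hfxB (by linarith)
            have h8 : B * (1 - L) < ε / 4 := by
              have h9 : 1 - L < ε / (4 * B) := by linarith
              have h10 := mul_lt_mul_of_pos_left h9 hB
              have h11 : B * (ε / (4 * B)) = ε / 4 := hBε
              nlinarith
            linarith
          · have : f x * (1 - L) ≤ 0 :=
              mul_nonpos_of_nonneg_of_nonpos hfx.le (by linarith)
            linarith
      · push_neg at hΔM
        have hfx_small : f x ≤ δ := by
          rw [hfx_eq]
          have h1 : Real.exp (-Δ) ≤ Real.exp (-M) := Real.exp_le_exp.2 (by linarith)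
          calc B * Real.exp (-Δ) ≤ B * Real.exp (-M) :=
              mul_le_mul_of_nonneg_left h1 hB.le
            _ = B * (δ / B) := by rw [hexpM]
            _ = δ := by field_simp
        have hfa_small : F < 2 * δ := by
          have mono : Gt (t + la * Δ) ≤ Gt (t + la * M) := by
            apply Gt_anti
            have := mul_le_mul_of_nonneg_left hΔM.le hlapos.le
            linarith
          have hup := key_upper M t M hM h1ta hM le_rfl
          rw [← hla_eq] at hup
          have h5 : F ≤ δ * (Real.exp (2 * M / t ^ 2) * (1 + 2 / t ^ 2)) := by
            rw [hfaeq]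
            have h6 := mul_le_mul_of_nonneg_left (le_trans mono hup) hacK.le
            calc a * (cK * Gt (t + la * Δ)) = a * cK * Gt (t + la * Δ) := by ring
              _ ≤ a * cK * (Real.exp (-M) * (Real.exp (2 * M / t ^ 2) * (1 + 2 / t ^ 2)) * Gt t)
                  := h6
              _ = B * Real.exp (-M) * (Real.exp (2 * M / t ^ 2) * (1 + 2 / t ^ 2)) := by
                  rw [← hIDa]; ring
              _ = δ * (Real.exp (2 * M / t ^ 2) * (1 + 2 / t ^ 2)) := by
                  rw [hexpM]; field_simp
          have h7 : δ * (Real.exp (2 * M / t ^ 2) * (1 + 2 / t ^ 2)) < δ * 2 :=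
            mul_lt_mul_of_pos_left hU2a hδ0
          linarith
        have hfa0 : 0 ≤ F := by
          rw [hfaeq]
          exact mul_nonneg ha0.le (mul_nonneg cK_pos.le (Gt_pos _).le)
        rw [abs_lt]
        constructor
        · linarith
        · linarith
    · have hfx0 : f x = 0 := le_antisymm (not_lt.1 hfx) (hf0 x hx)
      have h0 : fa a x = 0 := by
        rw [hfadef]; simp only [if_neg (fun hc : B < a ∧ 0 < f x => hfx hc.2)]
      rw [hfx0, h0]
      simpa using hε
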